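/- Fix positive integers s, t, α with α ≤ min s t, and a positive integer v with α * v = (s+1) * (s*t + α). Set k = s*(t+1), λ = s − 1 + t*(α − 1), μ = α*(t+1). Let f and g be natural numbers satisfying f * (α*(s+t+1−α)) = s*t*(s*t+s+t+1) and g * (α*(s+t+1−α)) = s*(s*t+α)*(s+1−α). Let G be a simple graph on Fin v with G.IsSRGWith v k λ μ. Then the characteristic polynomial of G.adjMatrix ℚ equals (X − k) * (X − ((s : ℚ) − α))^f * (X + ((t : ℚ) + 1))^g in ℚ[X]. -/

import Mathlib

open Polynomial

section Aux

open Matrix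

lemma charpoly_conj_aux {m R : Type*} [Fintype m] [DecidableEq m] [CommRing R]
    (U N V : Matrix m m R) (hUV : U * V = 1) :
    (U * N * V).charpoly = N.charpoly := by
  have hcm : charmatrix (U * N * V) = (U.map C) * charmatrix N * (V.map C) := by
    simp only [charmatrix, RingHom.mapMatrix_apply]
    rw [mul_sub, sub_mul, Matrix.map_mul (f := (C : R →+* R[X])), Matrix.map_mul]
    congr 1
    rw [mul_assoc, scalar_commute (X : R[X]) (Commute.all _), ← mul_assoc,
      ← Matrix.map_mul, hUV]
    simp
  have hdet : (U.map (C : R →+* R[X])).det * (V.map (C : R →+* R[X])).det = 1 := by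
    rw [← det_mul, ← Matrix.map_mul, hUV]; simp
  rw [Matrix.charpoly, hcm, det_mul, det_mul, Matrix.charpoly]
  calc (U.map (C : R →+* R[X])).det * (charmatrix N).det * (V.map (C : R →+* R[X])).det
      = (charmatrix N).det * ((U.map (C : R →+* R[X])).det * (V.map (C : R →+* R[X])).det) := by
        ring
    _ = (charmatrix N).det := by rw [hdet, mul_one]

lemma split3_prod {n : Type*} [Fintype n] {M : Type*} [CommMonoid M] (ev : n → ℝ) (a b c : ℝ)
    (hvals : ∀ i, ev i = a ∨ ev i = b ∨ ev i = c) (φ : ℝ → M) :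
    ∏ i, φ (ev i) = φ a ^ (Finset.univ.filter fun i => ev i = a).card *
      (φ b ^ ((Finset.univ.filter fun i => ¬ ev i = a).filter fun i => ev i = b).card *
      φ c ^ ((Finset.univ.filter fun i => ¬ ev i = a).filter fun i => ¬ ev i = b).card) := by
  rw [← Finset.prod_filter_mul_prod_filter_not Finset.univ (fun i => ev i = a),
    ← Finset.prod_filter_mul_prod_filter_not
      (Finset.univ.filter fun i => ¬ ev i = a) (fun i => ev i = b)]
  congr 1
  · rw [Finset.prod_congr rfl (fun i hi => by
      rw [Finset.mem_filter] at hi; rw [hi.2] : ∀ i ∈ _, φ (ev i) = φ a)]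
    rw [Finset.prod_const]
  congr 1
  · rw [Finset.prod_congr rfl (fun i hi => by
      rw [Finset.mem_filter] at hi; rw [hi.2] : ∀ i ∈ _, φ (ev i) = φ b)]
    rw [Finset.prod_const]
  · rw [Finset.prod_congr rfl (fun i hi => by
      simp only [Finset.mem_filter] at hi
      rcases hvals i with h | h | h
      · exact absurd h hi.1.2
      · exact absurd h hi.2
      · rw [h] : ∀ i ∈ _, φ (ev i) = φ c)]
    rw [Finset.prod_const]

lemma split3_sum {n : Type*} [Fintype n] (ev : n → ℝ) (a b c : ℝ)
    (hvals : ∀ i, ev i = a ∨ ev i = b ∨ ev i = c) (φ : ℝ → ℝ) :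
    ∑ i, φ (ev i) = (Finset.univ.filter fun i => ev i = a).card * φ a +
      (((Finset.univ.filter fun i => ¬ ev i = a).filter fun i => ev i = b).card * φ b +
      ((Finset.univ.filter fun i => ¬ ev i = a).filter fun i => ¬ ev i = b).card * φ c) := by
  rw [← Finset.sum_filter_add_sum_filter_not Finset.univ (fun i => ev i = a),
    ← Finset.sum_filter_add_sum_filter_not
      (Finset.univ.filter fun i => ¬ ev i = a) (fun i => ev i = b)]
  congr 1
  · rw [Finset.sum_congr rfl (fun i hi => by
      rw [Finset.mem_filter] at hi; rw [hi.2] : ∀ i ∈ _, φ (ev i) = φ a)]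
    rw [Finset.sum_const, nsmul_eq_mul]
  congr 1
  · rw [Finset.sum_congr rfl (fun i hi => by
      rw [Finset.mem_filter] at hi; rw [hi.2] : ∀ i ∈ _, φ (ev i) = φ b)]
    rw [Finset.sum_const, nsmul_eq_mul]
  · rw [Finset.sum_congr rfl (fun i hi => by
      simp only [Finset.mem_filter] at hi
      rcases hvals i with h | h | h
      · exact absurd h hi.1.2
      · exact absurd h hi.2
      · rw [h] : ∀ i ∈ _, φ (ev i) = φ c)]
    rw [Finset.sum_const, nsmul_eq_mul]

lemma split3_card {n : Type*} [Fintype n] (ev : n → ℝ) (a b : ℝ) :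
    (Finset.univ.filter fun i => ev i = a).card +
      (((Finset.univ.filter fun i => ¬ ev i = a).filter fun i => ev i = b).card +
      ((Finset.univ.filter fun i => ¬ ev i = a).filter fun i => ¬ ev i = b).card) =
      Fintype.card n := by
  rw [Finset.card_filter_add_card_filter_not (s := Finset.univ.filter fun i => ¬ ev i = a),
    Finset.card_filter_add_card_filter_not, Finset.card_univ]

end Aux

open Matrix

set_option maxHeartbeats 1000000 in
/-- Lemma 3.1 together with the multiplicity formulas (3.5)–(3.6): the
characteristic polynomial of the adjacency matrix of the point graph of a
partial geometry `pg(s,t,α)` is `(X−k)(X−(s−α))^f (X+(t+1))^g`, where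
`f = st(st+s+t+1)/(α(s+t+1−α))` and `g = s(st+α)(s+1−α)/(α(s+t+1−α))`. -/
theorem stmt_19 (s t α v : ℕ) (hs : 0 < s) (ht : 0 < t) (hα : 0 < α)
    (hmin : α ≤ min s t) (hv : 0 < v)
    (hveq : α * v = (s + 1) * (s * t + α))
    (f g : ℕ)
    (hf : f * (α * (s + t + 1 - α)) = s * t * (s * t + s + t + 1))
    (hg : g * (α * (s + t + 1 - α)) = s * (s * t + α) * (s + 1 - α))
    (G : SimpleGraph (Fin v)) [DecidableRel G.Adj]
    (hG : G.IsSRGWith v (s * (t + 1)) (s - 1 + t * (α - 1)) (α * (t + 1))) :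
    (G.adjMatrix ℚ).charpoly =
      (X - C ((s * (t + 1) : ℕ) : ℚ)) *
        (X - C ((s : ℚ) - (α : ℚ))) ^ f *
        (X + C ((t : ℚ) + 1)) ^ g := by
  classical
  have hαs : α ≤ s := le_trans hmin (min_le_left _ _)
  have hαt : α ≤ t := le_trans hmin (min_le_right _ _)
  set A := G.adjMatrix ℝ with hAdef
  set J : Matrix (Fin v) (Fin v) ℝ := Matrix.of fun _ _ => 1 with hJdef
  set kR : ℝ := (s : ℝ) * ((t : ℝ) + 1) with hkR
  set rR : ℝ := (s : ℝ) - (α : ℝ) with hrR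
  set sR : ℝ := -((t : ℝ) + 1) with hsR
  set mR : ℝ := (α : ℝ) * ((t : ℝ) + 1) with hmR
  -- basic real inequalities
  have h1s : (1:ℝ) ≤ (s:ℝ) := by exact_mod_cast hs
  have h1t : (1:ℝ) ≤ (t:ℝ) := by exact_mod_cast ht
  have h1α : (1:ℝ) ≤ (α:ℝ) := by exact_mod_cast hα
  have hαsR : (α:ℝ) ≤ (s:ℝ) := by exact_mod_cast hαs
  have hαtR : (α:ℝ) ≤ (t:ℝ) := by exact_mod_cast hαt
  have hkr : kR ≠ rR := by rw [hkR, hrR]; nlinarith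
  have hks : kR ≠ sR := by rw [hkR, hsR]; nlinarith
  have hrs : rR ≠ sR := by rw [hrR, hsR]; intro h; nlinarith [h]
  -- the matrix identity
  have hC : (Gᶜ.adjMatrix ℝ) = J - 1 - A := by
    ext i j
    by_cases h : i = j
    · subst h; simp [hJdef, hAdef]
    · simp only [SimpleGraph.adjMatrix_apply, SimpleGraph.compl_adj, hJdef,
        Matrix.sub_apply, Matrix.of_apply, Matrix.one_apply_ne h, hAdef, ne_eq, h,
        not_false_eq_true, true_and]
      by_cases ha : G.Adj i j <;> simp [ha]
  have hme := hG.matrix_eq (α := ℝ)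
  rw [hC] at hme
  have hcast : ((s - 1 + t * (α - 1) : ℕ) : ℝ) = (s : ℝ) - 1 + (t:ℝ) * ((α:ℝ) - 1) := by
    push_cast [Nat.cast_sub hs, Nat.cast_sub hα]
    ring
  have hsq : A * A = kR • (1 : Matrix (Fin v) (Fin v) ℝ)
      + ((s : ℝ) - 1 + (t:ℝ) * ((α:ℝ) - 1)) • A + mR • (J - 1 - A) := by
    rw [show A * A = A ^ 2 from (pow_two A).symm, hme,
      ← Nat.cast_smul_eq_nsmul ℝ (s * (t+1)), ← Nat.cast_smul_eq_nsmul ℝ (s - 1 + t * (α-1)),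
      ← Nat.cast_smul_eq_nsmul ℝ (α * (t+1)), hcast]
    push_cast
    rw [hkR, hmR]
  have hAJ : A * J = kR • J := by
    ext i j
    simp only [hAdef, hJdef, SimpleGraph.adjMatrix_mul_apply, Matrix.smul_apply, Matrix.of_apply]
    simp [hG.regular i, hkR]
  have hfact : (A - rR • 1) * (A - sR • 1) = mR • J := by
    have expand : (A - rR • 1) * (A - sR • 1)
        = A * A - (rR + sR) • A + (rR * sR) • (1 : Matrix (Fin v) (Fin v) ℝ) := by
      simp only [sub_mul, mul_sub, Matrix.smul_mul, Matrix.mul_smul, smul_smul, one_mul,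
        mul_one]
      module
    rw [expand, hsq]
    simp only [hkR, hrR, hsR, hmR]
    module
  have hcube : (A - kR • 1) * ((A - rR • 1) * (A - sR • 1)) = 0 := by
    rw [hfact, Matrix.mul_smul, sub_mul, Matrix.smul_mul, one_mul, hAJ]
    simp
  -- spectral data
  have hA : A.IsHermitian := by
    rw [Matrix.IsHermitian, Matrix.conjTranspose_eq_transpose_of_trivial]
    exact G.isSymm_adjMatrix
  set ev : Fin v → ℝ := hA.eigenvalues with hev
  set U : Matrix (Fin v) (Fin v) ℝ := (hA.eigenvectorUnitary : Matrix (Fin v) (Fin v) ℝ) with hU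
  have hUV : U * star U = 1 := (Matrix.mem_unitaryGroup_iff).mp hA.eigenvectorUnitary.2
  have hVU : star U * U = 1 := (Matrix.mem_unitaryGroup_iff').mp hA.eigenvectorUnitary.2
  have hspec : A = U * Matrix.diagonal ev * star U := by
    have h := hA.spectral_theorem
    rw [Unitary.conjStarAlgAut_apply] at h
    exact h
  -- eigenvalue cubic
  have hvals : ∀ i, ev i = kR ∨ ev i = rR ∨ ev i = sR := by
    intro i
    set w : Fin v → ℝ := ⇑(hA.eigenvectorBasis i) with hw
    have hw0 : w ≠ 0 := by
      intro h
      have : hA.eigenvectorBasis i = 0 := by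
        ext j
        exact congrFun h j
      exact hA.eigenvectorBasis.toBasis.ne_zero i (by simpa using this)
    have hAw : A *ᵥ w = ev i • w := hA.mulVec_eigenvectorBasis i
    have step : ∀ (c : ℝ) (u : Fin v → ℝ), (A - c • 1) *ᵥ u = A *ᵥ u - c • u := by
      intro c u
      rw [Matrix.sub_mulVec, Matrix.smul_mulVec, Matrix.one_mulVec]
    have key : ((ev i - kR) * ((ev i - rR) * (ev i - sR))) • w = 0 := by
      have h1 : (A - sR • 1) *ᵥ w = (ev i - sR) • w := by
        rw [step, hAw, sub_smul]
      have h2 : (A - rR • 1) *ᵥ ((ev i - sR) • w) = ((ev i - rR) * (ev i - sR)) • w := by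
        rw [Matrix.mulVec_smul, step, hAw]
        match_scalars
        ring
      have h3 := congrArg (fun M => M *ᵥ w) hcube
      simp only [Matrix.zero_mulVec, ← Matrix.mulVec_mulVec] at h3
      rw [h1, h2, Matrix.mulVec_smul, step, hAw] at h3
      rw [← h3]
      match_scalars
      ring
    rcases smul_eq_zero.mp key with h | h
    · rcases mul_eq_zero.mp h with h' | h'
      · exact Or.inl (by linarith [sub_eq_zero.mp h'])
      · rcases mul_eq_zero.mp h' with h'' | h''
        · exact Or.inr (Or.inl (sub_eq_zero.mp h''))
        · exact Or.inr (Or.inr (sub_eq_zero.mp h''))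
    · exact absurd h hw0
  -- multiplicities
  set a1 := (Finset.univ.filter fun i => ev i = kR).card with ha1
  set a2 := ((Finset.univ.filter fun i => ¬ ev i = kR).filter fun i => ev i = rR).card with ha2
  set a3 := ((Finset.univ.filter fun i => ¬ ev i = kR).filter fun i => ¬ ev i = rR).card with ha3
  have hcard : a1 + (a2 + a3) = v := by
    rw [ha1, ha2, ha3, split3_card ev kR rR, Fintype.card_fin]
  -- trace identities
  have htr0 : A.trace = 0 := SimpleGraph.trace_adjMatrix ℝ G
  have htr1 : A.trace = ∑ i, ev i := by
    rw [hspec, Matrix.trace_mul_cycle, hVU, one_mul, Matrix.trace_diagonal]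
  have htr2 : (A * A).trace = ∑ i, (ev i)^2 := by
    rw [hspec]
    have h3 : (U * Matrix.diagonal ev * star U) * (U * Matrix.diagonal ev * star U)
        = U * (Matrix.diagonal ev * Matrix.diagonal ev) * star U := by
      simp only [mul_assoc]
      rw [← mul_assoc (star U) U, hVU, one_mul]
    rw [h3, Matrix.trace_mul_cycle, hVU, one_mul, Matrix.diagonal_mul_diagonal,
      Matrix.trace_diagonal]
    simp [sq]
  have htrsq : (A * A).trace = (v:ℝ) * kR := by
    have hCtr : Matrix.trace (J - 1 - A) = 0 := by
      rw [← hC]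
      exact SimpleGraph.trace_adjMatrix ℝ Gᶜ
    rw [hsq, Matrix.trace_add, Matrix.trace_add, Matrix.trace_smul, Matrix.trace_smul,
      Matrix.trace_smul, hCtr, htr0, Matrix.trace_one, Fintype.card_fin]
    simp [smul_eq_mul]
    ring
  -- the three linear equations for (a1, a2, a3)
  have E1 : (a1:ℝ) + ((a2:ℝ) + (a3:ℝ)) = v := by
    exact_mod_cast congrArg (Nat.cast : ℕ → ℝ) hcard
  have E2 : (a1:ℝ) * kR + ((a2:ℝ) * rR + (a3:ℝ) * sR) = 0 := by
    rw [ha1, ha2, ha3, ← split3_sum ev kR rR sR hvals (fun x => x), ← htr1, htr0]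
  have E3 : (a1:ℝ) * kR^2 + ((a2:ℝ) * rR^2 + (a3:ℝ) * sR^2) = (v:ℝ) * kR := by
    rw [ha1, ha2, ha3, ← split3_sum ev kR rR sR hvals (fun x => x^2), ← htr2, htrsq]
  -- the reference equations for (1, f, g)
  have hα0 : (α:ℝ) ≠ 0 := by linarith
  have hFpos : (0:ℝ) < (s:ℝ) + (t:ℝ) + 1 - (α:ℝ) := by linarith
  have hne : (α:ℝ) * ((s:ℝ) + (t:ℝ) + 1 - (α:ℝ)) ≠ 0 :=
    mul_ne_zero hα0 (ne_of_gt hFpos)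
  have hf' : (f:ℝ) * ((α:ℝ) * ((s:ℝ) + (t:ℝ) + 1 - (α:ℝ)))
      = (s:ℝ) * (t:ℝ) * ((s:ℝ)*(t:ℝ) + (s:ℝ) + (t:ℝ) + 1) := by
    have := congrArg (Nat.cast : ℕ → ℝ) hf
    push_cast [Nat.cast_sub (by omega : α ≤ s + t + 1)] at this
    linarith [this]
  have hg' : (g:ℝ) * ((α:ℝ) * ((s:ℝ) + (t:ℝ) + 1 - (α:ℝ)))
      = (s:ℝ) * ((s:ℝ)*(t:ℝ) + (α:ℝ)) * ((s:ℝ) + 1 - (α:ℝ)) := by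
    have := congrArg (Nat.cast : ℕ → ℝ) hg
    push_cast [Nat.cast_sub (by omega : α ≤ s + t + 1), Nat.cast_sub (by omega : α ≤ s + 1)]
      at this
    linarith [this]
  have hv' : (α:ℝ) * (v:ℝ) = ((s:ℝ) + 1) * ((s:ℝ)*(t:ℝ) + (α:ℝ)) := by
    exact_mod_cast congrArg (Nat.cast : ℕ → ℝ) hveq
  have F1 : (1:ℝ) + ((f:ℝ) + (g:ℝ)) = v := by
    apply mul_left_cancel₀ (mul_ne_zero hα0 hne)
    rw [hkR] at *
    linear_combination (α:ℝ) * hf' + (α:ℝ) * hg'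
      - ((α:ℝ) * ((s:ℝ) + (t:ℝ) + 1 - (α:ℝ))) * hv'
  have F2 : (1:ℝ) * kR + ((f:ℝ) * rR + (g:ℝ) * sR) = 0 := by
    apply mul_right_cancel₀ hne
    rw [hkR, hrR, hsR]
    linear_combination ((s:ℝ) - (α:ℝ)) * hf' + (-((t:ℝ) + 1)) * hg'
  have F3 : (1:ℝ) * kR^2 + ((f:ℝ) * rR^2 + (g:ℝ) * sR^2) = (v:ℝ) * kR := by
    apply mul_left_cancel₀ (mul_ne_zero hα0 hne)
    rw [hkR, hrR, hsR]
    linear_combination ((α:ℝ) * ((s:ℝ) - (α:ℝ))^2) * hf'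
      + ((α:ℝ) * ((t:ℝ) + 1)^2) * hg'
      - ((s:ℝ) * ((t:ℝ) + 1) * ((α:ℝ) * ((s:ℝ) + (t:ℝ) + 1 - (α:ℝ)))) * hv'
  -- solve the linear system: a1 = 1, a2 = f, a3 = g
  have hd2 : ((a2:ℝ) - (f:ℝ)) * ((rR - kR) * (rR - sR)) = 0 := by
    linear_combination E3 - F3 - (kR + sR) * E2 + (kR + sR) * F2 + (kR * sR) * E1
      - (kR * sR) * F1
  have hd3 : ((a3:ℝ) - (g:ℝ)) * ((sR - kR) * (sR - rR)) = 0 := by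
    linear_combination E3 - F3 - (kR + rR) * E2 + (kR + rR) * F2 + (kR * rR) * E1
      - (kR * rR) * F1
  have ha2f : (a2:ℝ) = (f:ℝ) := by
    have := mul_eq_zero.mp hd2
    rcases this with h | h
    · linarith [sub_eq_zero.mp h]
    · rcases mul_eq_zero.mp h with h' | h'
      · exact absurd (sub_eq_zero.mp h') (fun hh => hkr hh.symm)
      · exact absurd (sub_eq_zero.mp h') hrs
  have ha3g : (a3:ℝ) = (g:ℝ) := by
    rcases mul_eq_zero.mp hd3 with h | h
    · linarith [sub_eq_zero.mp h]
    · rcases mul_eq_zero.mp h with h' | h'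
      · exact absurd (sub_eq_zero.mp h') (fun hh => hks hh.symm)
      · exact absurd (sub_eq_zero.mp h') (fun hh => hrs hh.symm)
  have ha11 : (a1:ℝ) = 1 := by linarith
  have ha1' : a1 = 1 := by exact_mod_cast ha11
  have ha2' : a2 = f := by exact_mod_cast ha2f
  have ha3' : a3 = g := by exact_mod_cast ha3g
  -- the characteristic polynomial over ℝ
  have hcpR : A.charpoly = (X - C kR) * ((X - C rR) ^ f * (X - C sR) ^ g) := by
    rw [hspec, charpoly_conj_aux _ _ _ hUV,
      Matrix.charpoly_of_upperTriangular _ (Matrix.blockTriangular_diagonal _)]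
    have := split3_prod ev kR rR sR hvals (fun x => (X : ℝ[X]) - C x)
    simp only [← ha1, ← ha2, ← ha3] at this
    simp only [Matrix.diagonal_apply_eq]
    rw [this, ha1', ha2', ha3', pow_one]
  -- transfer to ℚ
  have hmap : A = (G.adjMatrix ℚ).map (algebraMap ℚ ℝ) := by
    ext i j
    by_cases h : G.Adj i j <;> simp [hAdef, h, Matrix.map_apply]
  apply Polynomial.map_injective (algebraMap ℚ ℝ) (algebraMap ℚ ℝ).injective
  rw [← Matrix.charpoly_map, ← hmap, hcpR]
  simp only [Polynomial.map_mul, Polynomial.map_pow, Polynomial.map_sub, Polynomial.map_add,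
    Polynomial.map_X, Polynomial.map_C]
  rw [hkR, hrR, hsR]
  have e1 : (algebraMap ℚ ℝ) ((s * (t + 1) : ℕ) : ℚ) = (s:ℝ) * ((t:ℝ) + 1) := by
    rw [map_natCast]
    push_cast
    ring
  have e2 : (algebraMap ℚ ℝ) ((s : ℚ) - (α : ℚ)) = (s:ℝ) - (α:ℝ) := by
    rw [map_sub, map_natCast, map_natCast]
  have e3 : (algebraMap ℚ ℝ) ((t : ℚ) + 1) = (t:ℝ) + 1 := by
    rw [map_add, map_natCast, _root_.map_one]
  rw [e1, e2, e3, show (X : ℝ[X]) - C (-((t:ℝ) + 1)) = X + C ((t:ℝ) + 1) by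
    rw [map_neg, sub_neg_eq_add]]
  ring
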